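/- If α > 0, C₂, C₃ ≥ 0, and nonnegative reals U, S satisfy: A(v, v) ≥ α U² and A(v, w₂) ≥ (1/2)S² − C₃U² with |||w₂||| ≤ C₂√(U² + S²), then for w₃ = v + δ α w₂ with δ = min(1, α/(2C₃·α + 1))·(1/2): A(v, w₃) ≥ (α/2)·min(1, δ)·(U² + S²) ≥ β √(U²+S²)·|||w₃||| where |||w₃||| ≤ (1 + δαC₂)√(U²+S²), for an explicit β = β(α, C₂, C₃) > 0. -/

import Mathlib

theorem stmt_15 (α C₂ C₃ : ℝ) (hα : 0 < α) (hC₂ : 0 ≤ C₂) (hC₃ : 0 ≤ C₃) :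
    ∃ δ β : ℝ, 0 < δ ∧ 0 < β ∧
      ∀ U S Avv Avw2 nw2 nw3 : ℝ, 0 ≤ U → 0 ≤ S → 0 ≤ nw2 → 0 ≤ nw3 →
        α * U ^ 2 ≤ Avv → (1 / 2) * S ^ 2 - C₃ * U ^ 2 ≤ Avw2 →
        nw2 ≤ C₂ * Real.sqrt (U ^ 2 + S ^ 2) →
        nw3 ≤ (1 + δ * α * C₂) * Real.sqrt (U ^ 2 + S ^ 2) →
        β * Real.sqrt (U ^ 2 + S ^ 2) * nw3 ≤ Avv + δ * α * Avw2 := by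
  set δ : ℝ := 1 / (2 * C₃ + 2) with hδdef
  have hδpos : 0 < δ := by positivity
  have hden : 0 < 1 + δ * α * C₂ := by positivity
  refine ⟨δ, δ * α / (2 * (1 + δ * α * C₂)), hδpos, by positivity, ?_⟩
  intro U S Avv Avw2 nw2 nw3 hU hS hnw2 hnw3 h1 h2 _ h4
  set Q : ℝ := U ^ 2 + S ^ 2 with hQ
  have hQ0 : 0 ≤ Q := by positivity
  have hsq : Real.sqrt Q * Real.sqrt Q = Q := Real.mul_self_sqrt hQ0
  have hsqrt0 : 0 ≤ Real.sqrt Q := Real.sqrt_nonneg Q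
  have hβ0 : 0 ≤ δ * α / (2 * (1 + δ * α * C₂)) := by positivity
  have step1 : δ * α / (2 * (1 + δ * α * C₂)) * Real.sqrt Q * nw3 ≤
      δ * α / 2 * Q := by
    have : δ * α / (2 * (1 + δ * α * C₂)) * Real.sqrt Q * nw3 ≤
        δ * α / (2 * (1 + δ * α * C₂)) * Real.sqrt Q *
          ((1 + δ * α * C₂) * Real.sqrt Q) := by
      apply mul_le_mul_of_nonneg_left h4 (by positivity)
    calc δ * α / (2 * (1 + δ * α * C₂)) * Real.sqrt Q * nw3 ≤
        δ * α / (2 * (1 + δ * α * C₂)) * Real.sqrt Q *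
          ((1 + δ * α * C₂) * Real.sqrt Q) := this
      _ = δ * α / (2 * (1 + δ * α * C₂)) * (1 + δ * α * C₂) * (Real.sqrt Q * Real.sqrt Q) := by ring
      _ = δ * α / 2 * Q := by rw [hsq]; field_simp
  have hδd : δ * (2 * C₃ + 2) = 1 := by
    rw [hδdef]; field_simp
  have hδle : δ ≤ 1 := by nlinarith
  have hδC₃ : δ * C₃ ≤ 1 / 2 := by nlinarith
  have step2 : δ * α / 2 * Q ≤ Avv + δ * α * Avw2 := by
    have h2' : δ * α * ((1 / 2) * S ^ 2 - C₃ * U ^ 2) ≤ δ * α * Avw2 :=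
      mul_le_mul_of_nonneg_left h2 (by positivity)
    have hUS : δ * α / 2 * (U ^ 2 + S ^ 2) ≤
        α * U ^ 2 + δ * α * ((1 / 2) * S ^ 2 - C₃ * U ^ 2) := by
      have hkey : 0 ≤ (1 - δ / 2 - δ * C₃) * α * U ^ 2 :=
        mul_nonneg (mul_nonneg (by linarith) hα.le) (sq_nonneg U)
      nlinarith [hkey]
    calc δ * α / 2 * Q ≤ α * U ^ 2 + δ * α * ((1 / 2) * S ^ 2 - C₃ * U ^ 2) := hUS
      _ ≤ Avv + δ * α * Avw2 := add_le_add h1 h2'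
  linarith [step1, step2]
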